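/- Let φ be the golden ratio. The image of ℤ² under the map (x,y) ↦ (φ⁻⁴x + φ⁻¹y, φ⁻³x) mod ℤ² is dense in the torus ℝ²/ℤ². -/

import Mathlib

noncomputable def gr : ℝ := (1 + Real.sqrt 5) / 2

noncomputable def Psi (p : ℤ × ℤ) : AddCircle (1 : ℝ) × AddCircle (1 : ℝ) :=
  (((gr ^ 4)⁻¹ * p.1 + gr⁻¹ * p.2 : ℝ), ((gr ^ 3)⁻¹ * p.1 : ℝ))

lemma gr_sq : gr ^ 2 = gr + 1 := by
  have h5 : Real.sqrt 5 ^ 2 = 5 := Real.sq_sqrt (by norm_num)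
  unfold gr; nlinarith [h5]

lemma gr_pos : 0 < gr := by
  have := Real.sqrt_nonneg 5
  unfold gr; linarith

lemma gr_irr : Irrational gr := by
  have h5 : Irrational (Real.sqrt 5) := by
    have h := (Nat.prime_five).irrational_sqrt
    norm_num at h ⊢
  have h1 : Irrational (1 + Real.sqrt 5) := by
    have := h5.intCast_add 1
    push_cast at this; exact this
  have := h1.div_intCast (by norm_num : (2 : ℤ) ≠ 0)
  push_cast at this
  exact this

/-- The subgroup `ℤ + θℤ` is dense in `ℝ` when `θ` is irrational. -/
lemma dense_sub (θ : ℝ) (hθ : Irrational θ) :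
    Dense ((AddSubgroup.zmultiples (1 : ℝ) ⊔ AddSubgroup.zmultiples θ : AddSubgroup ℝ) : Set ℝ) := by
  rcases (AddSubgroup.zmultiples (1 : ℝ) ⊔ AddSubgroup.zmultiples θ).dense_or_cyclic with h | ⟨a, ha⟩
  · exact h
  · exfalso
    have h1 : (1 : ℝ) ∈ AddSubgroup.zmultiples (1 : ℝ) ⊔ AddSubgroup.zmultiples θ :=
      AddSubgroup.mem_sup_left (AddSubgroup.mem_zmultiples 1)
    have hθm : θ ∈ AddSubgroup.zmultiples (1 : ℝ) ⊔ AddSubgroup.zmultiples θ :=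
      AddSubgroup.mem_sup_right (AddSubgroup.mem_zmultiples θ)
    rw [ha, AddSubgroup.mem_closure_singleton] at h1 hθm
    obtain ⟨m, hm⟩ := h1
    obtain ⟨n, hn⟩ := hθm
    have hm0 : (m : ℝ) ≠ 0 := by
      intro h
      rw [zsmul_eq_mul, h, zero_mul] at hm
      norm_num at hm
    refine hθ ⟨(n : ℚ) / (m : ℚ), ?_⟩
    rw [zsmul_eq_mul] at hm hn
    push_cast
    rw [div_eq_iff hm0, ← hn, mul_assoc, mul_comm a, hm, mul_one]

lemma dense_coset (θ : ℝ) (hθ : Irrational θ) (c : ℝ) :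
    Dense (Set.range (fun n : ℤ => ((c + n * θ : ℝ) : AddCircle (1 : ℝ)))) := by
  set S : AddSubgroup ℝ := AddSubgroup.zmultiples (1 : ℝ) ⊔ AddSubgroup.zmultiples θ
  have hS : Dense (S : Set ℝ) := dense_sub θ hθ
  set f : ℝ → AddCircle (1 : ℝ) := fun r => ((c + r : ℝ) : AddCircle (1 : ℝ))
  have hf : Continuous f :=
    (AddCircle.continuous_mk' 1).comp (continuous_const.add continuous_id)
  have hsurj : Function.Surjective f := by
    intro z
    obtain ⟨r, hr⟩ := QuotientAddGroup.mk_surjective z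
    exact ⟨r - c, by simp [f, hr]⟩
  have himg : Dense (f '' S) := hsurj.denseRange.dense_image hf hS
  refine himg.mono ?_
  rintro _ ⟨x, hx, rfl⟩
  obtain ⟨y, hy, z, hz, rfl⟩ := AddSubgroup.mem_sup.mp hx
  obtain ⟨m, rfl⟩ := hy
  obtain ⟨n, rfl⟩ := hz
  refine ⟨n, ?_⟩
  show ((c + n * θ : ℝ) : AddCircle (1 : ℝ)) = ((c + (m • (1:ℝ) + n • θ) : ℝ) : AddCircle (1:ℝ))
  have : ((m : ℝ) : AddCircle (1 : ℝ)) = 0 :=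
    (AddCircle.coe_eq_zero_iff 1).mpr ⟨m, by simp⟩
  rw [show (c + (m • (1:ℝ) + n • θ) : ℝ) = (c + n * θ) + (m : ℝ) by
    simp [zsmul_eq_mul]; ring]
  rw [show (((c + n * θ) + (m : ℝ) : ℝ) : AddCircle (1:ℝ)) =
      ((c + n * θ : ℝ) : AddCircle (1:ℝ)) + ((m : ℝ) : AddCircle (1:ℝ)) from rfl,
    this, add_zero]

lemma mem_of_dense {α : Type*} [TopologicalSpace α] {D C : Set α}
    (hD : Dense D) (hC : IsClosed C) (h : D ⊆ C) (x : α) : x ∈ C :=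
  hC.closure_subset_iff.mpr h (hD x)

theorem Psi_dense : Dense (Set.range Psi) := by
  have hgr := gr_irr
  have hne : gr ≠ 0 := ne_of_gt gr_pos
  have h1 : Irrational gr⁻¹ := hgr.inv
  have h3 : Irrational (gr ^ 3)⁻¹ := by
    have hcube : gr ^ 3 = 2 * gr + 1 := by nlinarith [gr_sq]
    rw [hcube]
    have h2 : Irrational (2 * gr) := by
      have := hgr.intCast_mul (by norm_num : (2 : ℤ) ≠ 0)
      push_cast at this; exact this
    have := h2.add_intCast 1
    push_cast at this
    exact this.inv
  have step1 : ∀ x : ℤ, ∀ a : AddCircle (1 : ℝ),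
      (a, (((gr ^ 3)⁻¹ * x : ℝ) : AddCircle (1 : ℝ))) ∈ closure (Set.range Psi) := by
    intro x
    have hcl : IsClosed ((fun a : AddCircle (1:ℝ) =>
        (a, (((gr ^ 3)⁻¹ * x : ℝ) : AddCircle (1 : ℝ)))) ⁻¹' closure (Set.range Psi)) :=
      isClosed_closure.preimage (Continuous.prodMk_left _)
    exact mem_of_dense (dense_coset gr⁻¹ h1 ((gr ^ 4)⁻¹ * x)) hcl
      (by rintro _ ⟨y, rfl⟩
          exact subset_closure ⟨(x, y), by simp [Psi, mul_comm (y : ℝ) gr⁻¹]⟩)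
  intro p
  obtain ⟨a, b⟩ := p
  have hcl : IsClosed ((fun b : AddCircle (1:ℝ) => (a, b)) ⁻¹' closure (Set.range Psi)) :=
    isClosed_closure.preimage (Continuous.prodMk_right _)
  exact mem_of_dense (dense_coset (gr ^ 3)⁻¹ h3 0) hcl
    (by rintro _ ⟨x, rfl⟩
        have := step1 x a
        simpa [mul_comm ((gr ^ 3)⁻¹) (x : ℝ)] using this) b
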